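/- The pairing h_n is a symmetric bilinear form on K^{2n}; its radical is exactly the line K·(1,1,…,1); and the induced nondegenerate symmetric bilinear form on the quotient K^{2n}/K·(1,…,1) has discriminant 2^{2n−1}(−1)^n modulo squares, i.e. for any basis of the quotient the Gram determinant of the induced form equals 2^{2n−1}(−1)^n·c² for some c ∈ K^×. -/

import Mathlib

set_option linter.unreachableTactic false
set_option linter.unusedTactic false

open Finset

/-- Extract the `k`-th coordinate (with 1-based subscripts `1 ≤ k ≤ N`) of a
vector `x ∈ K^N`, returning `0` for out-of-range subscripts. -/
def coordFn {K : Type*} [Zero K] (N : ℕ) (x : Fin N → K) (k : ℕ) : K :=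
  if hk : 1 ≤ k ∧ k ≤ N then x ⟨k - 1, by omega⟩ else 0

/-- The symmetric bilinear form `h_n` on `K^{2n}` attached to the affine generic
stratum of a ramified even special orthogonal group `SO_{2n}`:
`h_n(x,y) = (1/2)[(x_n − x_{2n})y_1 + (x_1 − x_n)y_n + (x_{n+2} − x_{n+1})y_{n+1}
 + (x_{n+1} − x_{n−1})y_{n+2} + Σ_{i=2}^{n−1}(x_{2n+2−i} − x_{2n+1−i})y_i
 + Σ_{i=n+3}^{2n}(x_{2n+2−i} − x_{2n+1−i})y_i]`. -/
def hSO {K : Type*} [Field K] (n : ℕ) (x y : Fin (2 * n) → K) : K :=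
  let X := coordFn (2 * n) x
  let Y := coordFn (2 * n) y
  (2 : K)⁻¹ *
    ((X n - X (2 * n)) * Y 1 + (X 1 - X n) * Y n
      + (X (n + 2) - X (n + 1)) * Y (n + 1) + (X (n + 1) - X (n - 1)) * Y (n + 2)
      + ∑ i ∈ Finset.Icc 2 (n - 1), (X (2 * n + 2 - i) - X (2 * n + 1 - i)) * Y i
      + ∑ i ∈ Finset.Icc (n + 3) (2 * n), (X (2 * n + 2 - i) - X (2 * n + 1 - i)) * Y i)

/-- The line `K·(1,…,1)` in `K^N`. -/
def allOnesLine (K : Type*) [Field K] (N : ℕ) : Submodule K (Fin N → K) :=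
  Submodule.span K {fun _ => (1 : K)}

def pii (n k : ℕ) : ℕ :=
  if k = 1 then n else if 2 * n ≤ k then n + 1
  else if k % 2 = 0 then k / 2 else 2 * n + 1 - k / 2

lemma sum_icc_even_odd {K : Type*} [AddCommMonoid K] (g : ℕ → K) :
    ∀ n : ℕ, 1 ≤ n →
    ∑ k ∈ Finset.Icc 2 (2 * n - 1), g k
      = ∑ j ∈ Finset.Icc 1 (n - 1), (g (2 * j) + g (2 * j + 1)) := by
  intro n hn
  induction n, hn using Nat.le_induction with
  | base => simp
  | succ n hn ih =>
    have e2 : 2 * (n + 1) - 1 = (2 * n - 1 + 1) + 1 := by omega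
    have e3 : n + 1 - 1 = (n - 1) + 1 := by omega
    rw [e2, e3, Finset.sum_Icc_succ_top (by omega), Finset.sum_Icc_succ_top (by omega),
      Finset.sum_Icc_succ_top (by omega), ih]
    have e4 : 2 * n - 1 + 1 = 2 * (n - 1 + 1) := by omega
    have e5 : 2 * n - 1 + 1 + 1 = 2 * (n - 1 + 1) + 1 := by omega
    rw [e5, e4, add_assoc]

lemma hSO_eq {K : Type*} [Field K] (n : ℕ) (hn : 2 ≤ n) (x y : Fin (2 * n) → K) :
    hSO n x y = (2 : K)⁻¹ * ∑ k ∈ Finset.Icc 1 (2 * n - 1),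
      (-1 : K) ^ k * ((coordFn (2 * n) x (pii n k) - coordFn (2 * n) x (pii n (k + 1)))
        * (coordFn (2 * n) y (pii n k) - coordFn (2 * n) y (pii n (k + 1)))) := by
  simp only [hSO]
  set X := coordFn (2 * n) x with hX
  set Y := coordFn (2 * n) y with hY
  congr 1
  have h1 : (∑ k ∈ Finset.Icc 1 (2 * n - 1),
      (-1 : K) ^ k * ((X (pii n k) - X (pii n (k + 1))) * (Y (pii n k) - Y (pii n (k + 1)))))
    = (∑ k ∈ Finset.Icc 1 (2 * n - 1),
        (-1 : K) ^ k * (X (pii n k) - X (pii n (k + 1))) * Y (pii n k))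
      - (∑ k ∈ Finset.Icc 1 (2 * n - 1),
        (-1 : K) ^ k * (X (pii n k) - X (pii n (k + 1))) * Y (pii n (k + 1))) := by
    rw [← Finset.sum_sub_distrib]; exact Finset.sum_congr rfl fun k _ => by ring
  have h2 : (∑ k ∈ Finset.Icc 1 (2 * n - 1),
        (-1 : K) ^ k * (X (pii n k) - X (pii n (k + 1))) * Y (pii n (k + 1)))
      = ∑ k ∈ Finset.Icc 2 (2 * n),
        (-1 : K) ^ (k - 1) * (X (pii n (k - 1)) - X (pii n k)) * Y (pii n k) := by
    refine Finset.sum_nbij' (fun k => k + 1) (fun k => k - 1) ?_ ?_ ?_ ?_ ?_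
    · intro a ha; simp only [Finset.mem_Icc] at *; omega
    · intro a ha; simp only [Finset.mem_Icc] at *; omega
    · intro a _; omega
    · intro a ha; simp only [Finset.mem_Icc] at ha; omega
    · intro a _; rw [Nat.add_sub_cancel]
  have h3 : Finset.Icc 1 (2 * n - 1) = insert 1 (Finset.Icc 2 (2 * n - 1)) := by
    ext i; simp only [Finset.mem_Icc, Finset.mem_insert]; omega
  have h4 : Finset.Icc 2 (2 * n) = insert (2 * n) (Finset.Icc 2 (2 * n - 1)) := by
    ext i; simp only [Finset.mem_Icc, Finset.mem_insert]; omega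
  have h5 : (∑ k ∈ Finset.Icc 2 (2 * n - 1),
        (-1 : K) ^ k * (X (pii n k) - X (pii n (k + 1))) * Y (pii n k))
      - (∑ k ∈ Finset.Icc 2 (2 * n - 1),
        (-1 : K) ^ (k - 1) * (X (pii n (k - 1)) - X (pii n k)) * Y (pii n k))
      = ∑ k ∈ Finset.Icc 2 (2 * n - 1),
          (-1 : K) ^ k * (X (pii n (k - 1)) - X (pii n (k + 1))) * Y (pii n k) := by
    rw [← Finset.sum_sub_distrib]
    refine Finset.sum_congr rfl fun k hk => ?_
    simp only [Finset.mem_Icc] at hk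
    have e : k - 1 + 1 = k := by omega
    have hp : (-1 : K) ^ (k - 1) = -(-1 : K) ^ k := by
      rw [← e, pow_succ]; simp only [Nat.add_sub_cancel]; ring
    rw [hp]; ring
  rw [h1, h2, h3, Finset.sum_insert (by simp), h4, Finset.sum_insert (by simp; omega)]
  rw [show ∀ A B S T : K, A + S - (B + T) = (A - B) + (S - T) from fun A B S T => by ring, h5]
  -- now handle the middle sum
  set F : ℕ → K := fun k => (-1 : K) ^ k * (X (pii n (k - 1)) - X (pii n (k + 1))) * Y (pii n k)
    with hF
  rw [show (∑ k ∈ Finset.Icc 2 (2 * n - 1),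
        (-1 : K) ^ k * (X (pii n (k - 1)) - X (pii n (k + 1))) * Y (pii n k))
      = ∑ k ∈ Finset.Icc 2 (2 * n - 1), F k from rfl,
    sum_icc_even_odd F n (by omega), Finset.sum_add_distrib]
  have h6 : Finset.Icc 1 (n - 1) = insert 1 (Finset.Icc 2 (n - 1)) := by
    ext i; simp only [Finset.mem_Icc, Finset.mem_insert]; omega
  have h7 : Finset.Icc 1 (n - 1) = insert (n - 1) (Finset.Icc 1 (n - 2)) := by
    ext i; simp only [Finset.mem_Icc, Finset.mem_insert]; omega
  have hA : (∑ j ∈ Finset.Icc 2 (n - 1), F (2 * j))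
      = ∑ i ∈ Finset.Icc 2 (n - 1), (X (2 * n + 2 - i) - X (2 * n + 1 - i)) * Y i := by
    refine Finset.sum_congr rfl fun j hj => ?_
    simp only [Finset.mem_Icc] at hj
    have p1 : pii n (2 * j - 1) = 2 * n + 2 - j := by unfold pii; split_ifs <;> first | omega | (exfalso; assumption)
    have p2 : pii n (2 * j + 1) = 2 * n + 1 - j := by unfold pii; split_ifs <;> first | omega | (exfalso; assumption)
    have p3 : pii n (2 * j) = j := by unfold pii; split_ifs <;> first | omega | (exfalso; assumption)
    have pe : (-1 : K) ^ (2 * j) = 1 := by rw [pow_mul]; norm_num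
    rw [hF]; dsimp only; rw [p1, p2, p3, pe]; ring
  have hB : (∑ j ∈ Finset.Icc 1 (n - 2), F (2 * j + 1))
      = ∑ i ∈ Finset.Icc (n + 3) (2 * n), (X (2 * n + 2 - i) - X (2 * n + 1 - i)) * Y i := by
    refine Finset.sum_nbij' (fun j => 2 * n + 1 - j) (fun i => 2 * n + 1 - i) ?_ ?_ ?_ ?_ ?_
    · intro a ha; simp only [Finset.mem_Icc] at *; omega
    · intro a ha; simp only [Finset.mem_Icc] at *; omega
    · intro a ha; simp only [Finset.mem_Icc] at ha; omega
    · intro a ha; simp only [Finset.mem_Icc] at ha; omega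
    · intro j hj
      simp only [Finset.mem_Icc] at hj
      have p1 : pii n (2 * j + 1 - 1) = j := by unfold pii; split_ifs <;> first | omega | (exfalso; assumption)
      have p2 : pii n (2 * j + 1 + 1) = j + 1 := by unfold pii; split_ifs <;> first | omega | (exfalso; assumption)
      have p3 : pii n (2 * j + 1) = 2 * n + 1 - j := by unfold pii; split_ifs <;> first | omega | (exfalso; assumption)
      have pe : (-1 : K) ^ (2 * j + 1) = -1 := Odd.neg_one_pow ⟨j, by ring⟩
      have e1 : 2 * n + 2 - (2 * n + 1 - j) = j + 1 := by omega
      have e2 : 2 * n + 1 - (2 * n + 1 - j) = j := by omega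
      rw [hF]; dsimp only; rw [p1, p2, p3, pe, e1, e2]; ring
  -- boundary evaluations
  have q1 : pii n 1 = n := by unfold pii; split_ifs <;> first | omega | (exfalso; assumption)
  have q2 : pii n (1 + 1) = 1 := by unfold pii; split_ifs <;> first | omega | (exfalso; assumption)
  have q3 : pii n (2 * n - 1) = n + 2 := by unfold pii; split_ifs <;> first | omega | (exfalso; assumption)
  have q4 : pii n (2 * n) = n + 1 := by unfold pii; split_ifs <;> first | omega | (exfalso; assumption)
  have q5 : (-1 : K) ^ (2 * n - 1) = -1 := Odd.neg_one_pow ⟨n - 1, by omega⟩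
  have hF2 : F 2 = (X n - X (2 * n)) * Y 1 := by
    have p1 : pii n (2 - 1) = n := by unfold pii; split_ifs <;> first | omega | (exfalso; assumption)
    have p2 : pii n (2 + 1) = 2 * n := by unfold pii; split_ifs <;> first | omega | (exfalso; assumption)
    have p3 : pii n 2 = 1 := by unfold pii; split_ifs <;> first | omega | (exfalso; assumption)
    rw [hF]; dsimp only; rw [p1, p2, p3]; norm_num
  have hFtop : F (2 * (n - 1) + 1) = (X (n + 1) - X (n - 1)) * Y (n + 2) := by
    have p1 : pii n (2 * (n - 1) + 1 - 1) = n - 1 := by unfold pii; split_ifs <;> first | omega | (exfalso; assumption)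
    have p2 : pii n (2 * (n - 1) + 1 + 1) = n + 1 := by unfold pii; split_ifs <;> first | omega | (exfalso; assumption)
    have p3 : pii n (2 * (n - 1) + 1) = n + 2 := by unfold pii; split_ifs <;> first | omega | (exfalso; assumption)
    have pe : (-1 : K) ^ (2 * (n - 1) + 1) = -1 := Odd.neg_one_pow ⟨n - 1, by ring⟩
    rw [hF]; dsimp only; rw [p1, p2, p3, pe]; ring
  have heven : (∑ j ∈ Finset.Icc 1 (n - 1), F (2 * j))
      = F 2 + ∑ j ∈ Finset.Icc 2 (n - 1), F (2 * j) := by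
    rw [h6, Finset.sum_insert (by simp)]
  have hodd : (∑ j ∈ Finset.Icc 1 (n - 1), F (2 * j + 1))
      = F (2 * (n - 1) + 1) + ∑ j ∈ Finset.Icc 1 (n - 2), F (2 * j + 1) := by
    rw [h7, Finset.sum_insert (by simp; omega)]
  rw [heven, hodd, hA, hB, hF2, hFtop, q1, q2, q3, q4, q5]
  ring

def sigm (n j : ℕ) : ℕ :=
  if j = n then 1 else if j = n + 1 then 2 * n
  else if j ≤ n - 1 then 2 * j else 2 * (2 * n + 1 - j) + 1

lemma pii_mem {n k : ℕ} (hn : 2 ≤ n) (h1 : 1 ≤ k) (h2 : k ≤ 2 * n) :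
    1 ≤ pii n k ∧ pii n k ≤ 2 * n := by
  unfold pii; split_ifs <;> first | omega | (exfalso; assumption)

lemma sigm_mem {n j : ℕ} (hn : 2 ≤ n) (h1 : 1 ≤ j) (h2 : j ≤ 2 * n) :
    1 ≤ sigm n j ∧ sigm n j ≤ 2 * n := by
  unfold sigm; split_ifs <;> first | omega | (exfalso; assumption)

lemma pii_sigm {n j : ℕ} (hn : 2 ≤ n) (h1 : 1 ≤ j) (h2 : j ≤ 2 * n) :
    pii n (sigm n j) = j := by
  unfold pii sigm; split_ifs <;> first | omega | (exfalso; assumption)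

lemma sigm_pii {n k : ℕ} (hn : 2 ≤ n) (h1 : 1 ≤ k) (h2 : k ≤ 2 * n) :
    sigm n (pii n k) = k := by
  unfold pii sigm; split_ifs <;> first | omega | (exfalso; assumption)

lemma coordFn_smul_add {K : Type*} [Field K] (N : ℕ) (a : K) (x x' : Fin N → K) (k : ℕ) :
    coordFn N (a • x + x') k = a * coordFn N x k + coordFn N x' k := by
  unfold coordFn; split <;> simp

lemma hSO_symm' {K : Type*} [Field K] (n : ℕ) (hn : 2 ≤ n) (x y : Fin (2 * n) → K) :
    hSO n x y = hSO n y x := by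
  rw [hSO_eq n hn, hSO_eq n hn]
  congr 1; exact Finset.sum_congr rfl fun k _ => by ring

lemma hSO_addsmul_left {K : Type*} [Field K] (n : ℕ) (hn : 2 ≤ n) (a : K)
    (x x' y : Fin (2 * n) → K) :
    hSO n (a • x + x') y = a * hSO n x y + hSO n x' y := by
  rw [hSO_eq n hn, hSO_eq n hn, hSO_eq n hn]
  have hs : ∀ k ∈ Finset.Icc 1 (2 * n - 1),
      (-1 : K) ^ k * ((coordFn (2 * n) (a • x + x') (pii n k)
          - coordFn (2 * n) (a • x + x') (pii n (k + 1)))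
        * (coordFn (2 * n) y (pii n k) - coordFn (2 * n) y (pii n (k + 1))))
      = a * ((-1 : K) ^ k * ((coordFn (2 * n) x (pii n k) - coordFn (2 * n) x (pii n (k + 1)))
          * (coordFn (2 * n) y (pii n k) - coordFn (2 * n) y (pii n (k + 1)))))
        + ((-1 : K) ^ k * ((coordFn (2 * n) x' (pii n k) - coordFn (2 * n) x' (pii n (k + 1)))
          * (coordFn (2 * n) y (pii n k) - coordFn (2 * n) y (pii n (k + 1))))) := by
    intro k _
    rw [coordFn_smul_add, coordFn_smul_add]
    ring
  rw [Finset.sum_congr rfl hs, Finset.sum_add_distrib, ← Finset.mul_sum]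
  ring

lemma hSO_addsmul_right {K : Type*} [Field K] (n : ℕ) (hn : 2 ≤ n) (a : K)
    (x y y' : Fin (2 * n) → K) :
    hSO n x (a • y + y') = a * hSO n x y + hSO n x y' := by
  rw [hSO_symm' n hn, hSO_addsmul_left n hn, hSO_symm' n hn y x, hSO_symm' n hn y' x]

def wVec (K : Type*) [Zero K] [One K] (n k : ℕ) : Fin (2 * n) → K :=
  fun i => if sigm n (i.1 + 1) ≤ k then 1 else 0

lemma coordFn_wVec {K : Type*} [Field K] {n m : ℕ} (hn : 2 ≤ n) (k : ℕ)
    (h1 : 1 ≤ m) (h2 : m ≤ 2 * n) :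
    coordFn (2 * n) (wVec K n k) (pii n m) = if m ≤ k then 1 else 0 := by
  obtain ⟨hp1, hp2⟩ := pii_mem hn h1 h2
  unfold coordFn
  rw [dif_pos ⟨hp1, hp2⟩]
  show (if sigm n (pii n m - 1 + 1) ≤ k then (1 : K) else 0) = _
  rw [show pii n m - 1 + 1 = pii n m from by omega, sigm_pii hn h1 h2]

lemma wVec_diff {K : Type*} [Field K] {n m : ℕ} (hn : 2 ≤ n) (k : ℕ)
    (h1 : 1 ≤ m) (h2 : m ≤ 2 * n - 1) :
    coordFn (2 * n) (wVec K n k) (pii n m) - coordFn (2 * n) (wVec K n k) (pii n (m + 1))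
      = if m = k then 1 else 0 := by
  rw [coordFn_wVec hn k h1 (by omega), coordFn_wVec hn k (by omega) (by omega)]
  rcases eq_or_ne m k with h | h
  · subst h; rw [if_pos le_rfl, if_neg (by omega), if_pos rfl]; ring
  · rw [if_neg h]
    rcases lt_or_ge k m with h' | h'
    · rw [if_neg (by omega), if_neg (by omega)]; ring
    · rw [if_pos (by omega), if_pos (by omega)]; ring

lemma hSO_wVec {K : Type*} [Field K] {n j k : ℕ} (hn : 2 ≤ n)
    (hj1 : 1 ≤ j) (hj2 : j ≤ 2 * n - 1) (hk1 : 1 ≤ k) (hk2 : k ≤ 2 * n - 1) :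
    hSO n (wVec K n j) (wVec K n k) = if j = k then (-1 : K) ^ j * 2⁻¹ else 0 := by
  rw [hSO_eq n hn]
  rw [Finset.sum_congr rfl (fun m hm => by
    have hm' := Finset.mem_Icc.mp hm
    rw [wVec_diff hn j hm'.1 hm'.2, wVec_diff hn k hm'.1 hm'.2])]
  rw [Finset.sum_eq_single_of_mem j (Finset.mem_Icc.mpr ⟨hj1, hj2⟩)
    (fun b _ hb => by rw [if_neg hb]; ring)]
  rw [if_pos rfl]
  split_ifs with h <;> ring

lemma coordFn_val {K : Type*} [Field K] {N : ℕ} (x : Fin N → K) (i : Fin N) :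
    coordFn N x (i.1 + 1) = x i := by
  unfold coordFn
  rw [dif_pos ⟨by omega, by omega⟩]
  congr 1

lemma radical_eq {K : Type*} [Field K] (h2 : (2 : K) ≠ 0) (n : ℕ) (hn : 2 ≤ n) :
    {x : Fin (2 * n) → K | ∀ y, hSO n x y = 0}
      = (allOnesLine K (2 * n) : Set (Fin (2 * n) → K)) := by
  ext x
  simp only [Set.mem_setOf_eq, SetLike.mem_coe]
  constructor
  · intro hx
    have hL : ∀ m, 1 ≤ m → m ≤ 2 * n - 1 →
        coordFn (2 * n) x (pii n m) = coordFn (2 * n) x (pii n (m + 1)) := by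
      intro m hm1 hm2
      have hxw := hx (wVec K n m)
      rw [hSO_eq n hn] at hxw
      rw [Finset.sum_congr rfl (fun l hl => by
        have hl' := Finset.mem_Icc.mp hl
        rw [wVec_diff hn m hl'.1 hl'.2])] at hxw
      rw [Finset.sum_eq_single_of_mem m (Finset.mem_Icc.mpr ⟨hm1, hm2⟩)
        (fun b _ hb => by rw [if_neg hb]; ring), if_pos rfl] at hxw
      have h3 : ((2 : K)⁻¹ * (-1 : K) ^ m)
          * (coordFn (2 * n) x (pii n m) - coordFn (2 * n) x (pii n (m + 1))) = 0 := by
        linear_combination hxw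
      have hne : ((2 : K)⁻¹ * (-1 : K) ^ m) ≠ 0 :=
        mul_ne_zero (inv_ne_zero h2) (pow_ne_zero _ (by norm_num))
      exact sub_eq_zero.mp ((mul_eq_zero.mp h3).resolve_left hne)
    have hchain : ∀ m, 1 ≤ m → m ≤ 2 * n →
        coordFn (2 * n) x (pii n m) = coordFn (2 * n) x n := by
      intro m hm1
      induction m, hm1 using Nat.le_induction with
      | base =>
        intro _
        rw [show pii n 1 = n from by
          unfold pii; split_ifs <;> first | omega | (exfalso; assumption)]
      | succ m hm ih =>
        intro hm2
        rw [← hL m hm (by omega)]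
        exact ih (by omega)
    have hall : ∀ j, 1 ≤ j → j ≤ 2 * n → coordFn (2 * n) x j = coordFn (2 * n) x n := by
      intro j hj1 hj2
      have := hchain (sigm n j) (sigm_mem hn hj1 hj2).1 (sigm_mem hn hj1 hj2).2
      rwa [pii_sigm hn hj1 hj2] at this
    unfold allOnesLine
    rw [Submodule.mem_span_singleton]
    refine ⟨coordFn (2 * n) x n, funext fun i => ?_⟩
    have h5 := hall (i.1 + 1) (by omega) (by omega)
    rw [coordFn_val] at h5
    simpa using h5.symm
  · intro hx y
    obtain ⟨a, ha⟩ := Submodule.mem_span_singleton.mp hx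
    rw [hSO_eq n hn]
    have hz : ∀ m, 1 ≤ m → m ≤ 2 * n → coordFn (2 * n) x m = a := by
      intro m hm1 hm2
      rw [← ha]
      unfold coordFn
      rw [dif_pos ⟨hm1, hm2⟩]
      simp
    rw [Finset.sum_eq_zero (fun l hl => by
      have hl' := Finset.mem_Icc.mp hl
      rw [hz (pii n l) (pii_mem hn (by omega) (by omega)).1 (pii_mem hn (by omega) (by omega)).2,
        hz (pii n (l + 1)) (pii_mem hn (by omega) (by omega)).1
          (pii_mem hn (by omega) (by omega)).2]
      ring), mul_zero]

lemma disc_part {K : Type} [Field K] (h2 : (2 : K) ≠ 0) (n : ℕ) (hn : 2 ≤ n)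
    (b : Fin (2 * n - 1) → (Fin (2 * n) → K))
    (hind : LinearIndependent K (fun i => (allOnesLine K (2 * n)).mkQ (b i))) :
    ∃ c : K, c ≠ 0 ∧ (Matrix.of fun i j => hSO n (b i) (b j)).det
      = 2 ^ (2 * n - 1) * (-1) ^ n * c ^ 2 := by
  classical
  set S := allOnesLine K (2 * n) with hS
  set aV : Fin (2 * n - 1) → (Fin (2 * n) → K) := fun i => wVec K n (i.1 + 1) with haV
  set d : Fin (2 * n - 1) → K := fun i => (-1 : K) ^ (i.1 + 1) * 2⁻¹ with hd
  have hdne : ∀ i, d i ≠ 0 := fun i =>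
    mul_ne_zero (pow_ne_zero _ (by norm_num)) (inv_ne_zero h2)
  have hgram : ∀ i j, hSO n (aV i) (aV j) = if i = j then d i else 0 := by
    intro i j
    have hi : i.1 + 1 ≤ 2 * n - 1 := by omega
    have hj : j.1 + 1 ≤ 2 * n - 1 := by omega
    rw [show aV i = wVec K n (i.1 + 1) from rfl, show aV j = wVec K n (j.1 + 1) from rfl,
      hSO_wVec hn (by omega) hi (by omega) hj]
    rcases eq_or_ne i j with h | h
    · subst h; rw [if_pos rfl, if_pos rfl]
    · rw [if_neg (fun hc => h (Fin.ext (by omega))), if_neg h]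
  have hrad : ∀ v ∈ S, ∀ y, hSO n v y = 0 := by
    intro v hv y
    have hset := radical_eq h2 n hn
    have : v ∈ {x : Fin (2 * n) → K | ∀ y, hSO n x y = 0} := by
      rw [hset]; exact hv
    exact this y
  have h0left : ∀ y : Fin (2 * n) → K, hSO n (0 : Fin (2 * n) → K) y = 0 :=
    fun y => hrad 0 (Submodule.zero_mem S) y
  have haddleft : ∀ u v y : Fin (2 * n) → K, hSO n (u + v) y = hSO n u y + hSO n v y := fun u v y => by
    have := hSO_addsmul_left n hn 1 u v y; simpa using this
  have hsmul_left : ∀ (c : K) (u y : Fin (2 * n) → K), hSO n (c • u) y = c * hSO n u y := fun c u y => by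
    have := hSO_addsmul_left n hn c u 0 y; simpa [h0left] using this
  have hsum_left : ∀ (s : Finset (Fin (2 * n - 1))) (g : Fin (2 * n - 1) → K)
      (v : Fin (2 * n - 1) → Fin (2 * n) → K) (y : Fin (2 * n) → K),
      hSO n (∑ i ∈ s, g i • v i) y = ∑ i ∈ s, g i * hSO n (v i) y := by
    intro s g v y
    induction s using Finset.induction_on with
    | empty => simpa using h0left y
    | insert _ _ hns ih =>
      rw [Finset.sum_insert hns, Finset.sum_insert hns, haddleft, hsmul_left, ih]
  have hsum_right : ∀ (x : Fin (2 * n) → K) (s : Finset (Fin (2 * n - 1)))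
      (g : Fin (2 * n - 1) → K) (v : Fin (2 * n - 1) → Fin (2 * n) → K),
      hSO n x (∑ i ∈ s, g i • v i) = ∑ i ∈ s, g i * hSO n x (v i) := by
    intro x s g v
    rw [hSO_symm' n hn, hsum_left]
    exact Finset.sum_congr rfl fun i _ => by rw [hSO_symm' n hn]
  -- linear independence of the anchor family in the quotient
  have haind : LinearIndependent K (fun i => S.mkQ (aV i)) := by
    rw [Fintype.linearIndependent_iff]
    intro g hg j
    have hmem : (∑ i, g i • aV i) ∈ S := by
      have hq : S.mkQ (∑ i, g i • aV i) = 0 := by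
        rw [map_sum]; simp only [map_smul]; exact hg
      rw [Submodule.mkQ_apply] at hq
      exact (Submodule.Quotient.mk_eq_zero S).mp hq
    have h1 : hSO n (∑ i, g i • aV i) (aV j) = 0 := hrad _ hmem _
    rw [hsum_left] at h1
    rw [Finset.sum_congr rfl (fun i _ => by rw [hgram i j])] at h1
    rw [Finset.sum_eq_single_of_mem j (Finset.mem_univ j)
      (fun i _ hi => by rw [if_neg hi, mul_zero]), if_pos rfl] at h1
    exact (mul_eq_zero.mp h1).resolve_right (hdne j)
  -- dimension count
  have hfr : Module.finrank K ((Fin (2 * n) → K) ⧸ S) = 2 * n - 1 := by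
    have h1 : Module.finrank K (Fin (2 * n) → K) = 2 * n := Module.finrank_fin_fun K
    have hone : (fun _ => (1 : K)) ≠ (0 : Fin (2 * n) → K) := by
      intro h
      have := congrFun h ⟨0, by omega⟩
      simpa using this
    have h2' : Module.finrank K S = 1 := finrank_span_singleton hone
    have h3 := Submodule.finrank_quotient_add_finrank S
    omega
  haveI : Nonempty (Fin (2 * n - 1)) := ⟨⟨0, by omega⟩⟩
  have hcard : Fintype.card (Fin (2 * n - 1))
      = Module.finrank K ((Fin (2 * n) → K) ⧸ S) := by
    rw [Fintype.card_fin, hfr]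
  let Ba : Module.Basis (Fin (2 * n - 1)) K ((Fin (2 * n) → K) ⧸ S) :=
    basisOfLinearIndependentOfCardEqFinrank haind hcard
  have hBa : ∀ i, Ba i = S.mkQ (aV i) := fun i => by
    rw [show Ba = basisOfLinearIndependentOfCardEqFinrank haind hcard from rfl,
      coe_basisOfLinearIndependentOfCardEqFinrank]
  let Bb : Module.Basis (Fin (2 * n - 1)) K ((Fin (2 * n) → K) ⧸ S) :=
    basisOfLinearIndependentOfCardEqFinrank hind hcard
  have hBb : ∀ i, Bb i = S.mkQ (b i) := fun i => by
    rw [show Bb = basisOfLinearIndependentOfCardEqFinrank hind hcard from rfl,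
      coe_basisOfLinearIndependentOfCardEqFinrank]
  set P : Matrix (Fin (2 * n - 1)) (Fin (2 * n - 1)) K := Ba.toMatrix Bb with hP
  have hPdet : P.det ≠ 0 := by
    have hmul := Module.Basis.toMatrix_mul_toMatrix_flip Ba Bb
    have hdet1 := congrArg Matrix.det hmul
    rw [Matrix.det_mul, Matrix.det_one] at hdet1
    exact left_ne_zero_of_mul_eq_one hdet1
  have hexp : ∀ j, S.mkQ (b j) = S.mkQ (∑ i, P i j • aV i) := by
    intro j
    rw [map_sum]
    simp only [map_smul]
    calc S.mkQ (b j) = Bb j := (hBb j).symm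
      _ = ∑ i, P i j • Ba i := (Ba.sum_toMatrix_smul_self Bb j).symm
      _ = ∑ i, P i j • S.mkQ (aV i) := Finset.sum_congr rfl fun i _ => by rw [hBa]
  have hdiffmem : ∀ j, b j - (∑ i, P i j • aV i) ∈ S := by
    intro j
    have hq : S.mkQ (b j - ∑ i, P i j • aV i) = 0 := by
      rw [map_sub, hexp, sub_self]
    rw [Submodule.mkQ_apply] at hq
    exact (Submodule.Quotient.mk_eq_zero S).mp hq
  have hGram : ∀ j k, hSO n (b j) (b k) = ∑ i, P i j * (d i * P i k) := by
    intro j k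
    set bj' := ∑ i, P i j • aV i with hbj'
    set bk' := ∑ i, P i k • aV i with hbk'
    have hbj : bj' + (b j - bj') = b j := by abel
    have hbk : bk' + (b k - bk') = b k := by abel
    calc hSO n (b j) (b k) = hSO n (bj' + (b j - bj')) (bk' + (b k - bk')) := by
          rw [hbj, hbk]
      _ = hSO n bj' (bk' + (b k - bk')) := by
          rw [haddleft, hrad _ (hdiffmem j), add_zero]
      _ = hSO n bj' bk' := by
          rw [hSO_symm' n hn, haddleft, hrad _ (hdiffmem k), add_zero,
            hSO_symm' n hn bk' bj']
      _ = ∑ i, P i j * hSO n (aV i) bk' := hsum_left _ _ _ _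
      _ = ∑ i, P i j * (d i * P i k) := by
          refine Finset.sum_congr rfl fun i _ => ?_
          rw [hbk', hsum_right]
          rw [Finset.sum_congr rfl (fun l _ => by rw [hgram i l])]
          rw [Finset.sum_eq_single_of_mem i (Finset.mem_univ i)
            (fun l _ hl => by rw [if_neg (fun hc => hl hc.symm), mul_zero]), if_pos rfl]
          ring
  have hMat : (Matrix.of fun i j => hSO n (b i) (b j)) = P.transpose * Matrix.diagonal d * P := by
    ext j k
    simp only [Matrix.mul_apply, Matrix.transpose_apply, Matrix.diagonal_apply,
      Matrix.of_apply]
    rw [hGram]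
    refine Finset.sum_congr rfl fun i _ => ?_
    rw [Finset.sum_eq_single_of_mem i (Finset.mem_univ i)
      (fun l _ hl => by rw [if_neg hl, mul_zero]), if_pos rfl]
    ring
  -- product of the diagonal
  have hsumnat : (∑ i : Fin (2 * n - 1), (i.1 + 1)) = (2 * n - 1) * n := by
    rw [Fin.sum_univ_eq_sum_range (fun i => i + 1) (2 * n - 1)]
    rw [Finset.sum_add_distrib, Finset.sum_const, Finset.card_range, smul_eq_mul, mul_one]
    have hg := Finset.sum_range_id_mul_two (2 * n - 1)
    have e1 : (2 * n - 1) * (2 * n - 1 - 1) = ((2 * n - 1) * (n - 1)) * 2 := by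
      rw [show 2 * n - 1 - 1 = 2 * (n - 1) from by omega]; ring
    have e2 : (2 * n - 1) * n = (2 * n - 1) * (n - 1) + (2 * n - 1) := by
      obtain ⟨m, rfl⟩ : ∃ m, n = m + 1 := ⟨n - 1, by omega⟩
      simp only [Nat.add_sub_cancel]
      exact Nat.mul_succ _ _
    omega
  have hprod : (∏ i : Fin (2 * n - 1), d i) = (-1 : K) ^ n * (2⁻¹ : K) ^ (2 * n - 1) := by
    have hd2 : (∏ i : Fin (2 * n - 1), d i)
        = (∏ i : Fin (2 * n - 1), (-1 : K) ^ (i.1 + 1))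
          * ∏ _x : Fin (2 * n - 1), (2⁻¹ : K) := by
      rw [← Finset.prod_mul_distrib]
    rw [hd2, Finset.prod_const, Finset.card_univ, Fintype.card_fin,
      Finset.prod_pow_eq_pow_sum, hsumnat]
    congr 1
    rcases Nat.even_or_odd n with he | ho
    · rw [Even.neg_one_pow (he.mul_left _), Even.neg_one_pow he]
    · rw [Odd.neg_one_pow (Odd.mul ⟨n - 1, by omega⟩ ho), Odd.neg_one_pow ho]
  have hdet : (Matrix.of fun i j => hSO n (b i) (b j)).det
      = P.det ^ 2 * ((-1 : K) ^ n * (2⁻¹ : K) ^ (2 * n - 1)) := by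
    rw [hMat, Matrix.det_mul, Matrix.det_mul, Matrix.det_transpose, Matrix.det_diagonal, hprod]
    ring
  refine ⟨P.det * (2⁻¹ : K) ^ (2 * n - 1),
    mul_ne_zero hPdet (pow_ne_zero _ (inv_ne_zero h2)), ?_⟩
  rw [hdet]
  have hinv : (2 : K) ^ (2 * n - 1) * (2⁻¹ : K) ^ (2 * n - 1) = 1 := by
    rw [← mul_pow, mul_inv_cancel₀ h2, one_pow]
  linear_combination (-((-1 : K) ^ n * P.det ^ 2 * (2⁻¹ : K) ^ (2 * n - 1))) * hinv

/-- `h_n` is a symmetric bilinear form on `K^{2n}`; its radical is exactly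
the line `K·(1,…,1)`; and the induced nondegenerate symmetric bilinear form on the
quotient `K^{2n}/K·(1,…,1)` has discriminant `2^{2n−1}(−1)^n` modulo squares: for any
basis of the quotient the Gram determinant of the induced form equals
`2^{2n−1}(−1)^n·c²` for some `c ∈ K^×`. -/
theorem hSO_symm_radical_discriminant
    (K : Type) [Field K] (h2 : (2 : K) ≠ 0) (n : ℕ) (hn : 2 ≤ n) :
    (∀ x y : Fin (2 * n) → K, hSO n x y = hSO n y x) ∧
    (∀ (a : K) (x x' y : Fin (2 * n) → K),
        hSO n (a • x + x') y = a * hSO n x y + hSO n x' y) ∧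
    (∀ (a : K) (x y y' : Fin (2 * n) → K),
        hSO n x (a • y + y') = a * hSO n x y + hSO n x y') ∧
    ({x : Fin (2 * n) → K | ∀ y, hSO n x y = 0}
        = (allOnesLine K (2 * n) : Set (Fin (2 * n) → K))) ∧
    (∀ b : Fin (2 * n - 1) → (Fin (2 * n) → K),
        LinearIndependent K (fun i => (allOnesLine K (2 * n)).mkQ (b i)) →
        Submodule.span K (Set.range fun i => (allOnesLine K (2 * n)).mkQ (b i)) = ⊤ →
        ∃ c : K, c ≠ 0 ∧
          (Matrix.of fun i j => hSO n (b i) (b j)).det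
            = 2 ^ (2 * n - 1) * (-1) ^ n * c ^ 2) := by
  refine ⟨fun x y => hSO_symm' n hn x y, fun a x x' y => hSO_addsmul_left n hn a x x' y,
    fun a x y y' => hSO_addsmul_right n hn a x y y', radical_eq h2 n hn,
    fun b hind _ => disc_part h2 n hn b hind⟩
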